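/- A consequence relation ⊢ on a sentential language is substitution-invariant and monotonic if and only if it has a strong intersective mixed semantics, i.e. a strong semantics whose truth-relation |≡ is the intersection of a family of mixed truth-relations |≡_{D_p^λ,D_c^λ}. -/

import Mathlib

universe u v w x

/-- Mixed truth-relation. -/
def Mixed {V : Type*} (Dp Dc : Set V) (γ δ : Set V) : Prop :=
  γ ⊆ Dp → (δ ∩ Dc).Nonempty

def Monotonic {L : Type*} (Cons : Set L → Set L → Prop) : Prop :=
  ∀ ⦃Γ₁ Γ₂ Δ₁ Δ₂ : Set L⦄, Γ₁ ⊆ Γ₂ → Δ₁ ⊆ Δ₂ → Cons Γ₁ Δ₁ → Cons Γ₂ Δ₂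

def ReflRel {L : Type*} (Cons : Set L → Set L → Prop) : Prop :=
  ∀ F : L, Cons {F} {F}

def TransRel {L : Type*} (Cons : Set L → Set L → Prop) : Prop :=
  ∀ Γ Δ : Set L, ¬ Cons Γ Δ →
    ∃ Γ' Δ' : Set L, Γ ⊆ Γ' ∧ Δ ⊆ Δ' ∧ ¬ Cons Γ' Δ' ∧ Γ' ∪ Δ' = Set.univ

def LRPermeable {L : Type*} (Cons : Set L → Set L → Prop) : Prop :=
  ∀ Γ Δ S : Set L, Cons (Γ ∪ S) Δ → Cons Γ (S ∪ Δ)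

def RLPermeable {L : Type*} (Cons : Set L → Set L → Prop) : Prop :=
  ∀ Γ Δ S : Set L, Cons Γ (S ∪ Δ) → Cons (Γ ∪ S) Δ

def Permeable {L : Type*} (Cons : Set L → Set L → Prop) : Prop :=
  LRPermeable Cons ∨ RLPermeable Cons

def CompactRel {L : Type*} (Cons : Set L → Set L → Prop) : Prop :=
  ∀ Γ Δ : Set L, Cons Γ Δ →
    ∃ Γ' Δ' : Set L, Γ' ⊆ Γ ∧ Δ' ⊆ Δ ∧ Γ'.Finite ∧ Δ'.Finite ∧ Cons Γ' Δ'

/-- Sound and complete intersective mixed semantics. -/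
def IsIMS {L V W Λ : Type*} (Cons : Set L → Set L → Prop)
    (interp : L → W → V) (Dp Dc : Λ → Set V) : Prop :=
  ∀ Γ Δ : Set L, Cons Γ Δ ↔
    ∀ (w : W) (l : Λ), Mixed (Dp l) (Dc l)
      ((fun F => interp F w) '' Γ) ((fun F => interp F w) '' Δ)

/-- Sound and complete mixed semantics (single pair). -/
def IsMixedSem {L V W : Type*} (Cons : Set L → Set L → Prop)
    (interp : L → W → V) (Dp Dc : Set V) : Prop :=
  ∀ Γ Δ : Set L, Cons Γ Δ ↔
    ∀ w : W, Mixed Dp Dc ((fun F => interp F w) '' Γ) ((fun F => interp F w) '' Δ)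

/-- Formulae of a sentential language. -/
inductive Formula (A : Type u) (C : Type u) (ar : C → ℕ) : Type u
  | atom : A → Formula A C ar
  | conn : (c : C) → (Fin (ar c) → Formula A C ar) → Formula A C ar

/-- Substitution induced by a map from atoms to formulae. -/
def Formula.subst {A C : Type u} {ar : C → ℕ} (σ : A → Formula A C ar) :
    Formula A C ar → Formula A C ar
  | .atom a => σ a
  | .conn c Fs => .conn c (fun i => (Fs i).subst σ)

def SubstInvariant {A C : Type u} {ar : C → ℕ}
    (Cons : Set (Formula A C ar) → Set (Formula A C ar) → Prop) : Prop :=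
  ∀ (σ : A → Formula A C ar) (Γ Δ : Set (Formula A C ar)),
    Cons Γ Δ → Cons (Formula.subst σ '' Γ) (Formula.subst σ '' Δ)

/-- Evaluation of formulae from truth-functions and a valuation. -/
def evalF {A C : Type u} {ar : C → ℕ} {V : Type v}
    (tf : (c : C) → (Fin (ar c) → V) → V) (v : A → V) : Formula A C ar → V
  | .atom a => v a
  | .conn c Fs => tf c (fun i => evalF tf v (Fs i))

/-- Truth-functionality of an interpretation w.r.t. truth-functions. -/
def Compositional {A C : Type u} {ar : C → ℕ} {V : Type v} {W : Type w}
    (interp : Formula A C ar → W → V)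
    (tf : (c : C) → (Fin (ar c) → V) → V) : Prop :=
  ∀ (c : C) (Fs : Fin (ar c) → Formula A C ar) (w : W),
    interp (Formula.conn c Fs) w = tf c (fun i => interp (Fs i) w)

/-- Regular connectives. -/
def RegularRel {A C : Type u} {ar : C → ℕ}
    (Cons : Set (Formula A C ar) → Set (Formula A C ar) → Prop) : Prop :=
  ∀ c : C, ∃ Bp Bc : Set (Set (Fin (ar c)) × Set (Fin (ar c))),
    ∀ (Γ Δ : Set (Formula A C ar)) (Fs : Fin (ar c) → Formula A C ar),
      (Cons (Γ ∪ {Formula.conn c Fs}) Δ ↔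
        ∀ B ∈ Bp, Cons (Γ ∪ Fs '' B.1) (Fs '' B.2 ∪ Δ)) ∧
      (Cons Γ ({Formula.conn c Fs} ∪ Δ) ↔
        ∀ B ∈ Bc, Cons (Γ ∪ Fs '' B.1) (Fs '' B.2 ∪ Δ))

lemma evalF_subst {A C : Type u} {ar : C → ℕ} {V : Type v}
    (tf : (c : C) → (Fin (ar c) → V) → V) (v : A → V)
    (σ : A → Formula A C ar) (F : Formula A C ar) :
    evalF tf v (Formula.subst σ F) = evalF tf (fun a => evalF tf v (σ a)) F := by
  induction F with
  | atom a => rfl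
  | conn c Fs ih => simp [Formula.subst, evalF, ih]

lemma evalF_conn_eq_subst {A C : Type u} {ar : C → ℕ}
    (σ : A → Formula A C ar) (F : Formula A C ar) :
    evalF (fun c Fs => Formula.conn c Fs) σ F = Formula.subst σ F := by
  induction F with
  | atom a => rfl
  | conn c Fs ih => simp [Formula.subst, evalF, ih]

/-- substitution-invariance + monotonicity is equivalent to the
existence of a strong intersective mixed semantics. -/
theorem statement_2 {A C : Type u} (ar : C → ℕ)
    (Cons : Set (Formula A C ar) → Set (Formula A C ar) → Prop) :
    (SubstInvariant Cons ∧ Monotonic Cons) ↔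
      ∃ (V : Type u) (tf : (c : C) → (Fin (ar c) → V) → V)
        (Λ : Type u) (Dp Dc : Λ → Set V),
        ∀ Γ Δ : Set (Formula A C ar), Cons Γ Δ ↔
          ∀ (v : A → V) (l : Λ),
            Mixed (Dp l) (Dc l)
              ((fun F => evalF tf v F) '' Γ) ((fun F => evalF tf v F) '' Δ) := by
  constructor
  · rintro ⟨hsub, hmono⟩
    refine ⟨Formula A C ar, fun c Fs => Formula.conn c Fs,
      {p : Set (Formula A C ar) × Set (Formula A C ar) // ¬ Cons p.1 p.2},
      fun l => l.1.1, fun l => (l.1.2)ᶜ, fun Γ Δ => ?_⟩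
    constructor
    · intro h v l hsubset
      by_contra hne
      apply l.2
      have h1 : Cons (Formula.subst v '' Γ) (Formula.subst v '' Δ) := hsub v Γ Δ h
      refine hmono ?_ ?_ h1
      · intro x hx
        have : x ∈ (fun F => evalF (fun c Fs => Formula.conn c Fs) v F) '' Γ := by
          obtain ⟨F, hF, rfl⟩ := hx
          exact ⟨F, hF, (evalF_conn_eq_subst v F)⟩
        exact hsubset this
      · intro x hx
        obtain ⟨F, hF, rfl⟩ := hx
        by_contra hxin
        exact hne ⟨Formula.subst v F, ⟨F, hF, (evalF_conn_eq_subst v F)⟩, hxin⟩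
    · intro h
      by_contra hc
      have := h (fun a => Formula.atom a) ⟨(Γ, Δ), hc⟩
      simp only [Mixed] at this
      have hid : ∀ F : Formula A C ar,
          evalF (fun c Fs => Formula.conn c Fs) (fun a => Formula.atom a) F = F := by
        intro F
        induction F with
        | atom a => rfl
        | conn c Fs ih => simp [evalF, ih]
      have h1 : (fun F => evalF (fun c Fs => Formula.conn c Fs)
          (fun a => Formula.atom a) F) '' Γ = Γ := by
        ext x; simp [hid]
      have h2 : (fun F => evalF (fun c Fs => Formula.conn c Fs)
          (fun a => Formula.atom a) F) '' Δ = Δ := by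
        ext x; simp [hid]
      rw [h1, h2] at this
      obtain ⟨x, hx1, hx2⟩ := this (le_refl Γ)
      exact hx2 hx1
  · rintro ⟨V, tf, Λ, Dp, Dc, h⟩
    constructor
    · intro σ Γ Δ hΓΔ
      rw [h]
      intro v l hsubset
      have := (h Γ Δ).mp hΓΔ (fun a => evalF tf v (σ a)) l
      have hΓ : (fun F => evalF tf (fun a => evalF tf v (σ a)) F) '' Γ ⊆ Dp l := by
        intro x hx
        obtain ⟨F, hF, rfl⟩ := hx
        exact hsubset ⟨Formula.subst σ F, ⟨F, hF, rfl⟩, evalF_subst tf v σ F⟩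
      obtain ⟨x, hx1, hx2⟩ := this hΓ
      obtain ⟨F, hF, rfl⟩ := hx1
      exact ⟨evalF tf (fun a => evalF tf v (σ a)) F,
        ⟨⟨Formula.subst σ F, ⟨F, hF, rfl⟩, evalF_subst tf v σ F⟩, hx2⟩⟩
    · intro Γ₁ Γ₂ Δ₁ Δ₂ hΓ hΔ h1
      rw [h] at h1 ⊢
      intro v l hsubset
      obtain ⟨x, hx1, hx2⟩ := h1 v l ((Set.image_mono hΓ).trans hsubset)
      exact ⟨x, Set.image_mono hΔ hx1, hx2⟩
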